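/- Let r : ℝ → ℝ be continuously differentiable with bounded derivative, and let G_σ(a; μ) denote the density of N(μ, σ²). Then lim_{σ → 0} (1/(2σ²)) · E_{a ~ N(μ,σ²)}[(a - μ)·r(a)] exists and equals r'(μ)/2. -/

import Mathlib

open MeasureTheory Filter

noncomputable def gaussAux (z : ℝ) : ℝ :=
  (Real.sqrt (2 * Real.pi))⁻¹ * Real.exp (-(1/2) * z ^ 2)

lemma gaussAux_nonneg (z : ℝ) : 0 ≤ gaussAux z :=
  mul_nonneg (inv_nonneg.2 (Real.sqrt_nonneg _)) (Real.exp_pos _).le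

lemma gaussAux_cont : Continuous gaussAux := by
  unfold gaussAux
  fun_prop

lemma integrable_exp_half : Integrable (fun z : ℝ => Real.exp (-(1/2) * z ^ 2)) :=
  integrable_exp_neg_mul_sq (by norm_num)

lemma integrable_mul_exp_half : Integrable (fun z : ℝ => z * Real.exp (-(1/2) * z ^ 2)) :=
  integrable_mul_exp_neg_mul_sq (by norm_num)

lemma integrable_sq_exp_half : Integrable (fun z : ℝ => z ^ 2 * Real.exp (-(1/2) * z ^ 2)) := by
  have h := integrable_rpow_mul_exp_neg_mul_sq (by norm_num : (0:ℝ) < 1/2) (s := 2) (by norm_num)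
  have h2 : ∀ z : ℝ, z ^ (2:ℝ) = z ^ 2 := fun z => by
    rw [show (2:ℝ) = ((2:ℕ):ℝ) by norm_num, Real.rpow_natCast]
  simpa only [h2] using h

lemma integrable_abs_exp_half : Integrable (fun z : ℝ => |z| * Real.exp (-(1/2) * z ^ 2)) := by
  have h := integrable_mul_exp_half.abs
  refine h.congr (Filter.Eventually.of_forall fun z => ?_)
  simp only [abs_mul, abs_of_pos (Real.exp_pos _)]

lemma exp_deriv_aux (x : ℝ) :
    HasDerivAt (fun z : ℝ => Real.exp (-(1/2) * z ^ 2)) (-x * Real.exp (-(1/2) * x ^ 2)) x := by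
  have h : HasDerivAt (fun z : ℝ => -(1/2) * z ^ 2) (-x) x := by
    have := (hasDerivAt_pow 2 x).const_mul (-(1/2) : ℝ)
    refine this.congr_deriv ?_
    push_cast
    ring
  have h2 := h.exp
  convert h2 using 1
  ring

lemma integral_id_exp_half : ∫ z : ℝ, z * Real.exp (-(1/2) * z ^ 2) = 0 := by
  apply integral_eq_zero_of_hasDerivAt_of_integrable
    (f := fun z : ℝ => -Real.exp (-(1/2) * z ^ 2))
  · intro x
    have := (exp_deriv_aux x).neg
    refine this.congr_deriv ?_
    ring
  · exact integrable_mul_exp_half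
  · exact integrable_exp_half.neg

lemma integral_exp_half : ∫ z : ℝ, Real.exp (-(1/2) * z ^ 2) = Real.sqrt (2 * Real.pi) := by
  rw [integral_gaussian]
  congr 1
  field_simp

lemma integral_sq_exp_half :
    ∫ z : ℝ, z ^ 2 * Real.exp (-(1/2) * z ^ 2) = Real.sqrt (2 * Real.pi) := by
  have h0 : ∫ z : ℝ, (Real.exp (-(1/2) * z ^ 2) - z ^ 2 * Real.exp (-(1/2) * z ^ 2)) = 0 := by
    apply integral_eq_zero_of_hasDerivAt_of_integrable
      (f := fun z : ℝ => z * Real.exp (-(1/2) * z ^ 2))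
    · intro x
      have := (hasDerivAt_id' (x := x)).mul (exp_deriv_aux x)
      refine this.congr_deriv ?_
      ring
    · exact integrable_exp_half.sub integrable_sq_exp_half
    · exact integrable_mul_exp_half
  rw [integral_sub integrable_exp_half integrable_sq_exp_half, sub_eq_zero] at h0
  rw [← h0, integral_exp_half]

lemma integrable_sq_gaussAux : Integrable (fun z : ℝ => z ^ 2 * gaussAux z) := by
  have h := integrable_sq_exp_half.const_mul (Real.sqrt (2 * Real.pi))⁻¹
  refine h.congr (Filter.Eventually.of_forall fun z => ?_)
  unfold gaussAux; ring

lemma integrable_abs_gaussAux : Integrable (fun z : ℝ => |z| * gaussAux z) := by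
  have h := integrable_abs_exp_half.const_mul (Real.sqrt (2 * Real.pi))⁻¹
  refine h.congr (Filter.Eventually.of_forall fun z => ?_)
  unfold gaussAux; ring

lemma integrable_id_gaussAux : Integrable (fun z : ℝ => z * gaussAux z) := by
  have h := integrable_mul_exp_half.const_mul (Real.sqrt (2 * Real.pi))⁻¹
  refine h.congr (Filter.Eventually.of_forall fun z => ?_)
  unfold gaussAux; ring

lemma integral_id_gaussAux : ∫ z : ℝ, z * gaussAux z = 0 := by
  have h : (fun z : ℝ => z * gaussAux z)
      = fun z : ℝ => (Real.sqrt (2 * Real.pi))⁻¹ * (z * Real.exp (-(1/2) * z ^ 2)) := by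
    funext z; unfold gaussAux; ring
  rw [h, integral_const_mul, integral_id_exp_half, mul_zero]

lemma integral_sq_gaussAux : ∫ z : ℝ, z ^ 2 * gaussAux z = 1 := by
  have h : (fun z : ℝ => z ^ 2 * gaussAux z)
      = fun z : ℝ => (Real.sqrt (2 * Real.pi))⁻¹ * (z ^ 2 * Real.exp (-(1/2) * z ^ 2)) := by
    funext z; unfold gaussAux; ring
  rw [h, integral_const_mul, integral_sq_exp_half, inv_mul_cancel₀]
  exact Real.sqrt_ne_zero'.mpr (by positivity)

/-- As σ → 0⁺, (1/(2σ²))·E_{a ~ N(μ,σ²)}[(a-μ)·r(a)] converges to r'(μ)/2 for a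
continuously differentiable reward r with bounded derivative. -/
theorem gaussian_policy_gradient_limit
    (r : ℝ → ℝ) (hr : ContDiff ℝ 1 r)
    (C : ℝ) (hC : ∀ x, |deriv r x| ≤ C) (μ : ℝ) :
    Tendsto
      (fun σ : ℝ => (1 / (2 * σ ^ 2)) *
        ∫ a, (a - μ) * r a *
          ((Real.sqrt (2 * Real.pi * σ ^ 2))⁻¹ *
            Real.exp (-(a - μ) ^ 2 / (2 * σ ^ 2))))
      (nhdsWithin 0 (Set.Ioi 0)) (nhds (deriv r μ / 2)) := by
  have hrd : Differentiable ℝ r := hr.differentiable one_ne_zero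
  have hrc : Continuous r := hr.continuous
  have hC0 : 0 ≤ C := le_trans (abs_nonneg _) (hC 0)
  have hlip : ∀ x y : ℝ, |r x - r y| ≤ C * |x - y| := by
    intro x y
    have := Convex.norm_image_sub_le_of_norm_deriv_le (s := Set.univ)
      (fun z _ => hrd z) (fun z _ => by simpa [Real.norm_eq_abs] using hC z)
      convex_univ (Set.mem_univ y) (Set.mem_univ x)
    simpa [Real.norm_eq_abs] using this
  -- dominated convergence
  have key : Tendsto (fun σ : ℝ => ∫ z, z * ((r (μ + σ * z) - r μ) / σ) * gaussAux z)
      (nhdsWithin 0 (Set.Ioi 0))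
      (nhds (∫ z, z * (deriv r μ * z) * gaussAux z)) := by
    apply tendsto_integral_filter_of_dominated_convergence
      (fun z : ℝ => C * (z ^ 2 * gaussAux z))
    · filter_upwards [self_mem_nhdsWithin] with σ hσ
      exact (((continuous_id.mul (((hrc.comp (continuous_const.add
        (continuous_const.mul continuous_id))).sub continuous_const).div_const σ)).mul
        gaussAux_cont)).aestronglyMeasurable
    · filter_upwards [self_mem_nhdsWithin] with σ hσ
      have hσ' : (0:ℝ) < σ := hσ
      refine Filter.Eventually.of_forall fun z => ?_
      have h1 : |r (μ + σ * z) - r μ| ≤ C * (σ * |z|) := by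
        have h := hlip (μ + σ * z) μ
        have h2 : |μ + σ * z - μ| = σ * |z| := by
          rw [add_sub_cancel_left, abs_mul, abs_of_pos hσ']
        rw [h2] at h; exact h
      rw [Real.norm_eq_abs, abs_mul, abs_mul, abs_of_nonneg (gaussAux_nonneg z), abs_div,
        abs_of_pos hσ']
      calc |z| * (|r (μ + σ * z) - r μ| / σ) * gaussAux z
          ≤ |z| * ((C * (σ * |z|)) / σ) * gaussAux z := by
            gcongr
            exact gaussAux_nonneg z
        _ = C * (z ^ 2 * gaussAux z) := by
            rw [show C * (σ * |z|) / σ = C * |z| by field_simp, ← sq_abs z]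
            ring
    · exact integrable_sq_gaussAux.const_mul C
    · refine Filter.Eventually.of_forall fun z => ?_
      have hda : HasDerivAt (fun σ : ℝ => r (μ + σ * z)) (deriv r μ * z) 0 := by
        have h1 : HasDerivAt (fun σ : ℝ => μ + σ * z) z 0 := by
          simpa using (((hasDerivAt_id (0:ℝ)).mul_const z).const_add μ)
        have h2 := (hrd (μ + 0 * z)).hasDerivAt
        have h3 := h2.comp (0:ℝ) h1
        simp only [zero_mul, add_zero] at h3
        exact h3
      rw [hasDerivAt_iff_tendsto_slope] at hda
      have h3 : Tendsto (fun σ : ℝ => (r (μ + σ * z) - r μ) / σ)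
          (nhdsWithin 0 (Set.Ioi 0)) (nhds (deriv r μ * z)) := by
        have h4 := hda.mono_left
          (nhdsWithin_mono (0:ℝ) fun x (hx : x ∈ Set.Ioi 0) => ne_of_gt hx)
        refine Tendsto.congr (fun σ => ?_) h4
        simp [slope_def_field]
      exact (h3.const_mul z).mul_const (gaussAux z)
  have hlim : ∫ z, z * (deriv r μ * z) * gaussAux z = deriv r μ := by
    have h : (fun z : ℝ => z * (deriv r μ * z) * gaussAux z)
        = fun z : ℝ => deriv r μ * (z ^ 2 * gaussAux z) := by funext z; ring
    rw [h, integral_const_mul, integral_sq_gaussAux, mul_one]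
  have key2 : Tendsto
      (fun σ : ℝ => (1/2 : ℝ) * ∫ z, z * ((r (μ + σ * z) - r μ) / σ) * gaussAux z)
      (nhdsWithin 0 (Set.Ioi 0)) (nhds (deriv r μ / 2)) := by
    have h := key.const_mul (1/2 : ℝ)
    rw [hlim] at h
    convert h using 2
    ring
  apply key2.congr'
  filter_upwards [self_mem_nhdsWithin] with σ hσ
  have hσ' : (0:ℝ) < σ := hσ
  have hσ0 : σ ≠ 0 := ne_of_gt hσ'
  set f : ℝ → ℝ := fun a => (a - μ) * r a *
    ((Real.sqrt (2 * Real.pi * σ ^ 2))⁻¹ * Real.exp (-(a - μ) ^ 2 / (2 * σ ^ 2))) with hf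
  -- change of variables
  have e1 : ∫ x : ℝ, f (σ * x + μ) = |σ⁻¹| • ∫ y : ℝ, f (y + μ) :=
    Measure.integral_comp_mul_left (fun x => f (x + μ)) σ
  have e2 : ∫ y : ℝ, f (y + μ) = ∫ a, f a := integral_add_right_eq_self f μ
  have hcov : ∫ a, f a = σ * ∫ z, f (σ * z + μ) := by
    rw [e1, e2, smul_eq_mul, abs_inv, abs_of_pos hσ']
    field_simp
  -- pointwise form of the substituted integrand
  have hsqrt : Real.sqrt (2 * Real.pi * σ ^ 2) = Real.sqrt (2 * Real.pi) * σ := by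
    rw [Real.sqrt_mul (by positivity), Real.sqrt_sq hσ'.le]
  have hpt : (fun z : ℝ => f (σ * z + μ)) = fun z => z * r (μ + σ * z) * gaussAux z := by
    funext z
    simp only [hf, gaussAux]
    rw [hsqrt]
    have harg : -(σ * z + μ - μ) ^ 2 / (2 * σ ^ 2) = -(1/2) * z ^ 2 := by
      field_simp
      ring
    rw [harg, show σ * z + μ = μ + σ * z from add_comm _ _, add_sub_cancel_left]
    have hs0 : Real.sqrt (2 * Real.pi) ≠ 0 := Real.sqrt_ne_zero'.mpr (by positivity)
    field_simp
  -- integrability of the substituted integrand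
  have hint1 : Integrable (fun z : ℝ => z * r (μ + σ * z) * gaussAux z) := by
    apply Integrable.mono'
      (g := fun z : ℝ => |r μ| * (|z| * gaussAux z) + (C * σ) * (z ^ 2 * gaussAux z))
    · exact (integrable_abs_gaussAux.const_mul _).add (integrable_sq_gaussAux.const_mul _)
    · exact ((continuous_id.mul (hrc.comp (continuous_const.add
        (continuous_const.mul continuous_id)))).mul gaussAux_cont).aestronglyMeasurable
    · refine Filter.Eventually.of_forall fun z => ?_
      rw [Real.norm_eq_abs, abs_mul, abs_mul, abs_of_nonneg (gaussAux_nonneg z)]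
      have hb : |r (μ + σ * z)| ≤ |r μ| + C * (σ * |z|) := by
        have h := hlip (μ + σ * z) μ
        have h2 : |μ + σ * z - μ| = σ * |z| := by
          rw [add_sub_cancel_left, abs_mul, abs_of_pos hσ']
        rw [h2] at h
        calc |r (μ + σ * z)| = |r μ + (r (μ + σ * z) - r μ)| := by congr 1; ring
          _ ≤ |r μ| + |r (μ + σ * z) - r μ| := abs_add_le _ _
          _ ≤ |r μ| + C * (σ * |z|) := by linarith
      calc |z| * |r (μ + σ * z)| * gaussAux z
          ≤ |z| * (|r μ| + C * (σ * |z|)) * gaussAux z := by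
            gcongr
            exact gaussAux_nonneg z
        _ = |r μ| * (|z| * gaussAux z) + (C * σ) * (|z| ^ 2 * gaussAux z) := by ring
        _ = |r μ| * (|z| * gaussAux z) + (C * σ) * (z ^ 2 * gaussAux z) := by rw [sq_abs]
  -- remove the constant r μ (odd moment vanishes)
  have hint2 : ∫ z, z * (r (μ + σ * z) - r μ) * gaussAux z
      = ∫ z, z * r (μ + σ * z) * gaussAux z := by
    have h : (fun z : ℝ => z * (r (μ + σ * z) - r μ) * gaussAux z)
        = fun z : ℝ => z * r (μ + σ * z) * gaussAux z - r μ * (z * gaussAux z) := by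
      funext z; ring
    rw [h, integral_sub hint1 (integrable_id_gaussAux.const_mul (r μ)),
      integral_const_mul, integral_id_gaussAux, mul_zero, sub_zero]
  have hint3 : ∫ z, z * ((r (μ + σ * z) - r μ) / σ) * gaussAux z
      = σ⁻¹ * ∫ z, z * (r (μ + σ * z) - r μ) * gaussAux z := by
    rw [← integral_const_mul]
    congr 1
    funext z
    field_simp
  show (1/2 : ℝ) * ∫ z, z * ((r (μ + σ * z) - r μ) / σ) * gaussAux z
      = (1 / (2 * σ ^ 2)) * ∫ a, f a
  rw [hint3, hint2, hcov, hpt]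
  field_simp
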